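/- Let d ≥ 1 and let e : Fin (d+1) → Fin d → ℂᵈ be such that for each b, (e_{b,j})_j is an orthonormal basis of ℂᵈ, and for all b ≠ b' and all j, j' one has |⟨e_{b,j}, e_{b',j'}⟩|² = 1/d. Then for every d×d Hermitian complex matrix A, ∑_{b=0}^{d} ∑_{j=0}^{d-1} (⟨e_{b,j}, A e_{b,j}⟩)² = tr(A²) + (tr A)², where each ⟨e_{b,j}, A e_{b,j}⟩ is a real number. -/

import Mathlib

open Matrix
open scoped BigOperators Kronecker

-- swap matrix
def SwM (d : ℕ) : Matrix (Fin d × Fin d) (Fin d × Fin d) ℂ :=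
  Matrix.of fun p q => if p.1 = q.2 ∧ p.2 = q.1 then 1 else 0

lemma trace_kron_SwM {d : ℕ} (B C : Matrix (Fin d) (Fin d) ℂ) :
    ((B ⊗ₖ C) * SwM d).trace = (B * C).trace := by
  rw [Matrix.trace, Matrix.trace]
  simp only [Matrix.diag_apply, Matrix.mul_apply, Matrix.kroneckerMap_apply, SwM,
    Matrix.of_apply]
  rw [← Finset.univ_product_univ, Finset.sum_product]
  simp [Fintype.sum_prod_type, ite_and, mul_ite, Finset.sum_ite_eq, Finset.sum_ite_eq']

lemma SwM_mul_SwM {d : ℕ} : SwM d * SwM d = 1 := by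
  ext p q
  simp only [Matrix.mul_apply, SwM, Matrix.of_apply, Matrix.one_apply]
  rw [← Finset.univ_product_univ, Finset.sum_product]
  simp [ite_and, Finset.sum_ite_eq, Finset.sum_ite_eq', Prod.ext_iff, eq_comm]

lemma trace_SwM {d : ℕ} : (SwM d).trace = (d : ℂ) := by
  rw [Matrix.trace]
  simp only [Matrix.diag_apply, SwM, Matrix.of_apply]
  rw [← Finset.univ_product_univ, Finset.sum_product]
  simp [ite_and, Finset.sum_ite_eq, Finset.sum_ite_eq']

lemma aux_trace_zero {n : Type*} [Fintype n] (M : Matrix n n ℂ)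
    (hM : ∀ i j, M j i = (starRingEnd ℂ) (M i j)) (h : (M * M).trace = 0) : M = 0 := by
  have key : (M * M).trace = ((∑ i, ∑ j, Complex.normSq (M i j) : ℝ) : ℂ) := by
    rw [Matrix.trace]
    push_cast
    refine Finset.sum_congr rfl fun i _ => ?_
    rw [Matrix.diag_apply, Matrix.mul_apply]
    refine Finset.sum_congr rfl fun j _ => ?_
    rw [hM i j, Complex.mul_conj]
  rw [key] at h
  have h0 : (∑ i, ∑ j, Complex.normSq (M i j) : ℝ) = 0 := by exact_mod_cast h
  ext i j
  have h1 := (Finset.sum_eq_zero_iff_of_nonneg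
    (fun i _ => Finset.sum_nonneg fun j _ => Complex.normSq_nonneg _)).mp h0 i (Finset.mem_univ i)
  have h2 := (Finset.sum_eq_zero_iff_of_nonneg
    (fun j _ => Complex.normSq_nonneg _)).mp h1 j (Finset.mem_univ j)
  simpa using Complex.normSq_eq_zero.mp h2

set_option maxHeartbeats 1000000 in
/-- MUB 2-design identity: if `e` gives `d+1` pairwise mutually unbiased
orthonormal bases of `ℂᵈ`, then for every Hermitian `A`,
`∑_{b,j} ⟨e b j, A (e b j)⟩² = tr(A²) + (tr A)²`, each `⟨e b j, A (e b j)⟩`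
being real. -/
theorem stmt_7 (d : ℕ) (hd : 1 ≤ d) (e : Fin (d + 1) → Fin d → Fin d → ℂ)
    (hortho : ∀ b j k, star (e b j) ⬝ᵥ e b k = if j = k then 1 else 0)
    (hmub : ∀ b b', b ≠ b' → ∀ j j', ‖star (e b j) ⬝ᵥ e b' j'‖ ^ 2 = 1 / d) :
    ∀ A : Matrix (Fin d) (Fin d) ℂ, A.IsHermitian →
      (∀ b j, (star (e b j) ⬝ᵥ (A *ᵥ e b j)).im = 0) ∧
      ∑ b : Fin (d + 1), ∑ j : Fin d, (star (e b j) ⬝ᵥ (A *ᵥ e b j)) ^ 2 =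
        (A * A).trace + A.trace ^ 2 := by
  classical
  intro A hA
  -- imaginary parts vanish
  have him : ∀ b j, (star (e b j) ⬝ᵥ (A *ᵥ e b j)).im = 0 := by
    intro b j
    have hc : star (star (e b j) ⬝ᵥ (A *ᵥ e b j)) = star (e b j) ⬝ᵥ (A *ᵥ e b j) := by
      conv_lhs => rw [Matrix.star_dotProduct]
      rw [star_star, Matrix.star_mulVec, hA, ← Matrix.dotProduct_mulVec]
    exact Complex.conj_eq_iff_im.mp hc
  refine ⟨him, ?_⟩
  have hdC : (d : ℂ) ≠ 0 := Nat.cast_ne_zero.mpr (by omega)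
  set P : Fin (d + 1) → Fin d → Matrix (Fin d) (Fin d) ℂ :=
    fun b j => Matrix.of fun i k => e b j i * (starRingEnd ℂ) (e b j k) with hPdef
  have h_tr_PP : ∀ b j b' j', (P b j * P b' j').trace
      = ((Complex.normSq (star (e b j) ⬝ᵥ e b' j') : ℝ) : ℂ) := by
    intro b j b' j'
    have h1 : (P b j * P b' j').trace
        = (star (e b j) ⬝ᵥ e b' j') * (starRingEnd ℂ) (star (e b j) ⬝ᵥ e b' j') := by
      rw [Matrix.trace]
      simp only [Matrix.diag_apply, Matrix.mul_apply, hPdef, Matrix.of_apply, dotProduct,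
        Pi.star_apply, Complex.star_def, _root_.map_sum, _root_.map_mul, Complex.conj_conj]
      rw [Finset.sum_mul_sum, Finset.sum_comm]
      exact Finset.sum_congr rfl fun k _ => Finset.sum_congr rfl fun i _ => by ring
    rw [h1]
    exact Complex.mul_conj _
  have hnorm : ∀ b j b' j', ((Complex.normSq (star (e b j) ⬝ᵥ e b' j') : ℝ) : ℂ)
      = if b = b' then (if j = j' then (1:ℂ) else 0) else 1 / (d : ℂ) := by
    intro b j b' j'
    by_cases hbb : b = b'
    · subst hbb
      rw [hortho b j j']
      by_cases hjj : j = j' <;> simp [hjj]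
    · have h2 := hmub b b' hbb j j'
      have h3 : Complex.normSq (star (e b j) ⬝ᵥ e b' j') = 1 / d := by
        rw [Complex.normSq_eq_norm_sq, h2]
      rw [h3, if_neg hbb]
      push_cast
      ring
  have h_tr_P : ∀ b j, (P b j).trace = 1 := by
    intro b j
    have h1 := hortho b j j
    rw [if_pos rfl] at h1
    calc (P b j).trace = star (e b j) ⬝ᵥ e b j := by
          rw [Matrix.trace]
          simp only [Matrix.diag_apply, hPdef, Matrix.of_apply, dotProduct,
            Pi.star_apply, Complex.star_def]
          exact Finset.sum_congr rfl fun i _ => mul_comm _ _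
      _ = 1 := h1
  have h_tr_PA : ∀ b j, (P b j * A).trace = star (e b j) ⬝ᵥ (A *ᵥ e b j) := by
    intro b j
    rw [Matrix.trace]
    simp only [Matrix.diag_apply, Matrix.mul_apply, hPdef, Matrix.of_apply, dotProduct,
      Matrix.mulVec, Pi.star_apply, Complex.star_def, Finset.mul_sum]
    rw [Finset.sum_comm]
    exact Finset.sum_congr rfl fun k _ => Finset.sum_congr rfl fun i _ => by ring
  set K : Matrix (Fin d × Fin d) (Fin d × Fin d) ℂ :=
    ∑ b : Fin (d+1), ∑ j : Fin d, (P b j ⊗ₖ P b j) with hKdef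
  set E : Matrix (Fin d × Fin d) (Fin d × Fin d) ℂ := 1 + SwM d with hEdef
  have hMstar : ∀ p q, (K - E) q p = (starRingEnd ℂ) ((K - E) p q) := by
    intro p q
    have hKs : K q p = (starRingEnd ℂ) (K p q) := by
      rw [hKdef]
      simp only [Matrix.sum_apply, Matrix.kroneckerMap_apply, hPdef, Matrix.of_apply,
        _root_.map_sum, _root_.map_mul, Complex.conj_conj]
      exact Finset.sum_congr rfl fun b _ => Finset.sum_congr rfl fun j _ => by ring
    have hEs : E q p = (starRingEnd ℂ) (E p q) := by
      rw [hEdef]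
      have hsw : (q.1 = p.2 ∧ q.2 = p.1) ↔ (p.1 = q.2 ∧ p.2 = q.1) := by
        constructor <;> rintro ⟨h, h'⟩ <;> exact ⟨h'.symm, h.symm⟩
      simp only [Matrix.add_apply, Matrix.one_apply, SwM, Matrix.of_apply, _root_.map_add,
        apply_ite (starRingEnd ℂ), _root_.map_one, _root_.map_zero]
      rw [if_congr hsw rfl rfl, if_congr (eq_comm (a := q) (b := p)) rfl rfl]
    simp only [Matrix.sub_apply, hKs, hEs, _root_.map_sub]
  have htrK : K.trace = ((d:ℂ) + 1) * d := by
    rw [hKdef]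
    simp only [Matrix.trace_sum, Matrix.trace_kronecker, h_tr_P, mul_one, Finset.sum_const,
      Finset.card_univ, Fintype.card_fin, nsmul_eq_mul]
    push_cast
    ring
  have htrKSw : (K * SwM d).trace = ((d:ℂ) + 1) * d := by
    rw [hKdef]
    simp only [Finset.sum_mul, Matrix.trace_sum, trace_kron_SwM, h_tr_PP, hnorm, if_pos rfl,
      Finset.sum_const, Finset.card_univ, Fintype.card_fin, nsmul_eq_mul]
    push_cast
    ring
  have hKX : ∀ X : Matrix (Fin d × Fin d) (Fin d × Fin d) ℂ,
      (K * X).trace = ∑ b : Fin (d+1), ∑ j : Fin d, ((P b j ⊗ₖ P b j) * X).trace := by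
    intro X
    rw [hKdef, Finset.sum_mul, Matrix.trace_sum]
    exact Finset.sum_congr rfl fun b _ => by rw [Finset.sum_mul, Matrix.trace_sum]
  have htrKK : (K * K).trace = 2 * ((d:ℂ) + 1) * d := by
    rw [hKX K]
    have hterm : ∀ b j, ((P b j ⊗ₖ P b j) * K).trace = 2 := by
      intro b j
      rw [Matrix.trace_mul_comm, hKX]
      have h1 : ∀ b' j', ((P b' j' ⊗ₖ P b' j') * (P b j ⊗ₖ P b j)).trace
          = (if b' = b then (if j' = j then (1:ℂ) else 0) else 1 / (d:ℂ)) *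
            (if b' = b then (if j' = j then (1:ℂ) else 0) else 1 / (d:ℂ)) := by
        intro b' j'
        rw [← Matrix.mul_kronecker_mul, Matrix.trace_kronecker, h_tr_PP, hnorm]
      rw [Finset.sum_congr rfl fun b' _ => Finset.sum_congr rfl fun j' _ => h1 b' j']
      have h2 : ∀ b' : Fin (d+1), (∑ j' : Fin d,
          (if b' = b then (if j' = j then (1:ℂ) else 0) else 1 / (d:ℂ)) *
          (if b' = b then (if j' = j then (1:ℂ) else 0) else 1 / (d:ℂ)))
          = if b' = b then 1 else 1 / (d:ℂ) := by
        intro b'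
        by_cases hb : b' = b
        · simp [hb, ite_mul, mul_ite, Finset.sum_ite_eq']
        · simp only [if_neg hb, Finset.sum_const, Finset.card_univ, Fintype.card_fin,
            nsmul_eq_mul]
          field_simp
      rw [Finset.sum_congr rfl fun b' _ => h2 b']
      have h3 : ∀ b' : Fin (d+1), (if b' = b then (1:ℂ) else 1 / (d:ℂ))
          = (if b' = b then (1:ℂ) - 1 / (d:ℂ) else 0) + 1 / (d:ℂ) := by
        intro b'; split <;> ring
      rw [Finset.sum_congr rfl fun b' _ => h3 b']
      rw [Finset.sum_add_distrib, Finset.sum_ite_eq', Finset.sum_const, Finset.card_univ,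
        Fintype.card_fin, if_pos (Finset.mem_univ b), nsmul_eq_mul]
      push_cast
      field_simp
      ring
    rw [Finset.sum_congr rfl fun b _ => Finset.sum_congr rfl fun j _ => hterm b j]
    simp only [Finset.sum_const, Finset.card_univ, Fintype.card_fin, nsmul_eq_mul]
    push_cast
    ring
  have htrEE : (E * E).trace = 2 * (d:ℂ) * d + 2 * d := by
    rw [hEdef]
    simp only [Matrix.add_mul, Matrix.mul_add, Matrix.one_mul, Matrix.mul_one, SwM_mul_SwM,
      Matrix.trace_add, Matrix.trace_one, trace_SwM, Fintype.card_prod, Fintype.card_fin]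
    push_cast
    ring
  have htrKE : (K * E).trace = ((d:ℂ) + 1) * d + ((d:ℂ) + 1) * d := by
    rw [hEdef, Matrix.mul_add, Matrix.mul_one, Matrix.trace_add, htrK, htrKSw]
  have h0 : ((K - E) * (K - E)).trace = 0 := by
    rw [Matrix.sub_mul, Matrix.mul_sub, Matrix.mul_sub, Matrix.trace_sub, Matrix.trace_sub,
      Matrix.trace_sub, htrKK, htrKE, Matrix.trace_mul_comm E K, htrKE, htrEE]
    ring
  have hKE : K = E := sub_eq_zero.mp (aux_trace_zero _ hMstar h0)
  calc ∑ b : Fin (d + 1), ∑ j : Fin d, (star (e b j) ⬝ᵥ (A *ᵥ e b j)) ^ 2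
      = (K * (A ⊗ₖ A)).trace := by
        rw [hKdef]
        simp only [Finset.sum_mul, Matrix.trace_sum, ← Matrix.mul_kronecker_mul,
          Matrix.trace_kronecker, h_tr_PA]
        exact Finset.sum_congr rfl fun b _ => Finset.sum_congr rfl fun j _ => pow_two _
    _ = (E * (A ⊗ₖ A)).trace := by rw [hKE]
    _ = (A * A).trace + A.trace ^ 2 := by
        rw [hEdef, Matrix.add_mul, Matrix.one_mul, Matrix.trace_add, Matrix.trace_kronecker,
          Matrix.trace_mul_comm, trace_kron_SwM]
        ring
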